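/- Let F : ℝ^n → ℝ be convex, differentiable, with F(0) ≤ 0, and L-smooth: F(x+y) ≤ F(x) + ⟨∇F(x), y⟩ + (L/2)‖y‖² for all x, y. Let (s_t)_{t=1}^T and (m_t)_{t=1}^T be sequences of vectors, set S_t = s_1 + ... + s_t with S_0 = 0, and let 0 < η_t ≤ η_{t-1} be decreasing positive step sizes. If the Blackwell condition ⟨∇F(η_t(S_{t-1} + m_t)), s_t⟩ ≤ 0 holds for all 1 ≤ t ≤ T, then F(η_T · S_T) ≤ (L/2) ∑_{t=1}^T η_T η_t ‖s_t − m_t‖². -/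

import Mathlib

open RealInnerProductSpace

/-- Gradient inequality for convex functions. -/
lemma grad_convex_ineq {n : ℕ} {F : EuclideanSpace ℝ (Fin n) → ℝ}
    {g : EuclideanSpace ℝ (Fin n) → EuclideanSpace ℝ (Fin n)}
    (hdiff : ∀ x, HasGradientAt F (g x) x)
    (hconv : ConvexOn ℝ Set.univ F) (x z : EuclideanSpace ℝ (Fin n)) :
    F x + ⟪g x, z - x⟫ ≤ F z := by
  set φ : ℝ → ℝ := fun t => F (x + t • (z - x)) with hφ
  have hline : ∀ t : ℝ, HasDerivAt (fun u : ℝ => x + u • (z - x)) (z - x) t := by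
    intro t
    simpa using ((hasDerivAt_id t).smul_const (z - x)).const_add x
  have hderiv : HasDerivAt φ ⟪g x, z - x⟫ 0 := by
    have h1 := (hdiff (x + (0:ℝ) • (z - x))).hasFDerivAt.comp_hasDerivAt 0 (hline 0)
    have h2 : HasDerivAt (F ∘ fun u : ℝ => x + u • (z - x)) ⟪g x, z - x⟫ 0 := by
      simpa [hφ, HasGradientAt] using h1
    exact h2
  have hφconv : ConvexOn ℝ Set.univ φ := by
    have h := (hconv.comp_affineMap (AffineMap.lineMap x z : ℝ →ᵃ[ℝ] _)).subset
      (Set.subset_univ _) convex_univ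
    have heq : φ = F ∘ (AffineMap.lineMap x z : ℝ →ᵃ[ℝ] _) := by
      funext t; simp [hφ, AffineMap.lineMap_apply, add_comm]
    rw [heq]; exact h
  have hslope := hφconv.le_slope_of_hasDerivWithinAt (Set.mem_univ (0:ℝ)) (Set.mem_univ (1:ℝ))
    one_pos (hderiv.hasDerivWithinAt)
  have : slope φ 0 1 = F z - F x := by
    simp [slope_def_field, hφ]
  linarith [hslope.trans_eq this]

/-- Theorem 1: general optimistic Lagrangian hedging bound with
decreasing step sizes. -/
theorem stmt_3 {n : ℕ} (T : ℕ) (hT : 1 ≤ T)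
    (F : EuclideanSpace ℝ (Fin n) → ℝ) (g : EuclideanSpace ℝ (Fin n) → EuclideanSpace ℝ (Fin n))
    (hdiff : ∀ x, HasGradientAt F (g x) x)
    (hconv : ConvexOn ℝ Set.univ F) (hF0 : F 0 ≤ 0) (L : ℝ)
    (hsmooth : ∀ x y, F (x + y) ≤ F x + ⟪g x, y⟫ + L / 2 * ‖y‖ ^ 2)
    (s m : ℕ → EuclideanSpace ℝ (Fin n))
    (S : ℕ → EuclideanSpace ℝ (Fin n))
    (hS : ∀ t, S t = ∑ k ∈ Finset.Icc 1 t, s k)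
    (η : ℕ → ℝ) (hηpos : ∀ t, 0 < η t) (hηdec : ∀ t, 1 ≤ t → η t ≤ η (t - 1))
    (hblackwell : ∀ t ∈ Finset.Icc 1 T, ⟪g (η t • (S (t - 1) + m t)), s t⟫ ≤ 0) :
    F (η T • S T) ≤ L / 2 * ∑ t ∈ Finset.Icc 1 T, η T * η t * ‖s t - m t‖ ^ 2 := by
  set C : ℕ → ℝ := fun t => L / 2 * ∑ k ∈ Finset.Icc 1 t, η k * ‖s k - m k‖ ^ 2 with hC
  have key : ∀ t, t ≤ T → F (η t • S t) ≤ η t * C t := by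
    intro t
    induction t with
    | zero =>
      intro _
      have hS0 : S 0 = 0 := by simp [hS]
      simp [hS0, hC, hF0]
    | succ t ih =>
      intro hle
      have hle' : t ≤ T := Nat.le_of_succ_le hle
      have ih' := ih hle'
      have hSucc : S (t + 1) = S t + s (t + 1) := by
        rw [hS, hS, Finset.sum_Icc_succ_top (Nat.le_add_left 1 t)]
      -- smoothness step
      set x := η (t + 1) • (S t + m (t + 1)) with hx
      set y := η (t + 1) • (s (t + 1) - m (t + 1)) with hy
      have hxy : x + y = η (t + 1) • S (t + 1) := by
        rw [hx, hy, hSucc, ← smul_add]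
        congr 1
        abel
      have hsm := hsmooth x y
      rw [hxy] at hsm
      have hBl : ⟪g x, s (t + 1)⟫ ≤ 0 := by
        have := hblackwell (t + 1) (Finset.mem_Icc.2 ⟨Nat.le_add_left 1 t, hle⟩)
        simpa [hx] using this
      have hinner : ⟪g x, y⟫ ≤ - (η (t + 1) * ⟪g x, m (t + 1)⟫) := by
        rw [hy, real_inner_smul_right, inner_sub_right]
        have := mul_le_mul_of_nonneg_left hBl (hηpos (t + 1)).le
        nlinarith [hηpos (t + 1)]
      -- gradient inequality step
      have hgrad := grad_convex_ineq hdiff hconv x (η (t + 1) • S t)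
      have hz : η (t + 1) • S t - x = -(η (t + 1) • m (t + 1)) := by
        rw [hx, smul_add]; abel
      rw [hz] at hgrad
      have hgrad' : F x - η (t + 1) * ⟪g x, m (t + 1)⟫ ≤ F (η (t + 1) • S t) := by
        have : ⟪g x, -(η (t + 1) • m (t + 1))⟫ = -(η (t + 1) * ⟪g x, m (t + 1)⟫) := by
          rw [inner_neg_right, real_inner_smul_right]
        linarith [hgrad, this ▸ hgrad]
      -- scaling step
      have hη1 : η (t + 1) ≤ η t := by simpa using hηdec (t + 1) (Nat.le_add_left 1 t)
      set lam := η (t + 1) / η t with hlam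
      have hlam_pos : 0 < lam := div_pos (hηpos _) (hηpos _)
      have hlam_le : lam ≤ 1 := div_le_one_of_le₀ hη1 (hηpos t).le
      have hscale : F (η (t + 1) • S t) ≤ lam * F (η t • S t) := by
        have hcomb := hconv.2 (Set.mem_univ (η t • S t)) (Set.mem_univ (0 : EuclideanSpace ℝ (Fin n)))
          hlam_pos.le (sub_nonneg.2 hlam_le) (by ring)
        have heq : lam • (η t • S t) + (1 - lam) • (0 : EuclideanSpace ℝ (Fin n))
            = η (t + 1) • S t := by
          rw [smul_zero, add_zero, smul_smul, hlam, div_mul_cancel₀]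
          exact (hηpos t).ne'
        rw [heq] at hcomb
        calc F (η (t + 1) • S t) ≤ lam * F (η t • S t) + (1 - lam) * F 0 := hcomb
          _ ≤ lam * F (η t • S t) := by nlinarith
      have hscale' : F (η (t + 1) • S t) ≤ η (t + 1) * C t := by
        calc F (η (t + 1) • S t) ≤ lam * F (η t • S t) := hscale
          _ ≤ lam * (η t * C t) := by
            exact mul_le_mul_of_nonneg_left ih' hlam_pos.le
          _ = η (t + 1) * C t := by
            have hcancel : lam * η t = η (t + 1) := by
              rw [hlam]; exact div_mul_cancel₀ _ (hηpos t).ne'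
            rw [← hcancel]; ring
      -- norm of y
      have hny : ‖y‖ ^ 2 = η (t + 1) ^ 2 * ‖s (t + 1) - m (t + 1)‖ ^ 2 := by
        rw [hy, norm_smul]
        rw [mul_pow, Real.norm_eq_abs, sq_abs]
      -- C recursion
      have hCrec : C (t + 1) = C t + L / 2 * (η (t + 1) * ‖s (t + 1) - m (t + 1)‖ ^ 2) := by
        rw [hC]
        simp only
        rw [Finset.sum_Icc_succ_top (Nat.le_add_left 1 t)]
        ring
      rw [hCrec]
      have hgoal_eq : η (t + 1) * (C t + L / 2 * (η (t + 1) * ‖s (t + 1) - m (t + 1)‖ ^ 2))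
          = η (t + 1) * C t + L / 2 * (η (t + 1) ^ 2 * ‖s (t + 1) - m (t + 1)‖ ^ 2) := by
        ring
      rw [hgoal_eq]
      have hsm' : F (η (t + 1) • S (t + 1)) ≤ F x + ⟪g x, y⟫
          + L / 2 * (η (t + 1) ^ 2 * ‖s (t + 1) - m (t + 1)‖ ^ 2) := by
        calc F (η (t + 1) • S (t + 1)) ≤ F x + ⟪g x, y⟫ + L / 2 * ‖y‖ ^ 2 := hsm
          _ = _ := by rw [hny]
      linarith [hsm', hinner, hgrad', hscale']
  have hfin := key T le_rfl
  calc F (η T • S T) ≤ η T * C T := hfin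
    _ = L / 2 * ∑ t ∈ Finset.Icc 1 T, η T * η t * ‖s t - m t‖ ^ 2 := by
      simp only [hC, Finset.mul_sum]
      exact Finset.sum_congr rfl fun k _ => by ring
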